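/- Suppose x : ℝ → ℝ is continuously differentiable and f : ℝ → ℝ is continuous, and for every continuously differentiable function φ : ℝ → ℝ with φ(a) = φ(b) = 0 we have -∫ t in a..b, (deriv φ t) * x(t) dt = ∫ t in a..b, φ(t) * f(t) dt. Then deriv x t = f(t) for all t in the open interval (a,b). -/

import Mathlib

open MeasureTheory intervalIntegral Set

lemma aux_no_pos (a b : ℝ) (g : ℝ → ℝ) (hg : Continuous g)
    (h : ∀ φ : ℝ → ℝ, ContDiff ℝ 1 φ → φ a = 0 → φ b = 0 →
      (∫ t in a..b, φ t * g t) = 0) :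
    ∀ t ∈ Set.Ioo a b, ¬ 0 < g t := by
  intro t₀ ht₀ hpos
  have hs : IsOpen ({t : ℝ | 0 < g t} ∩ Set.Ioo a b) :=
    (isOpen_lt continuous_const hg).inter isOpen_Ioo
  obtain ⟨r, hr, hball⟩ := Metric.isOpen_iff.mp hs t₀ ⟨hpos, ht₀⟩
  have hsub : Metric.ball t₀ (r/2) ⊆ {t : ℝ | 0 < g t} ∩ Set.Ioo a b :=
    (Metric.ball_subset_ball (by linarith)).trans hball
  set c : ContDiffBump t₀ := ⟨r/4, r/2, by positivity, by linarith⟩ with hc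
  have hcin : c.rIn = r/4 := rfl
  have hcout : c.rOut = r/2 := rfl
  have hzero : ∀ t : ℝ, t ∉ Metric.ball t₀ (r/2) → c t = 0 := by
    intro t ht
    exact c.zero_of_le_dist (by simpa [hcout, Metric.mem_ball, not_lt] using ht)
  have ha0 : c a = 0 := by
    apply hzero
    intro hmem
    exact absurd (hsub hmem).2.1 (lt_irrefl a)
  have hb0 : c b = 0 := by
    apply hzero
    intro hmem
    exact absurd (hsub hmem).2.2 (lt_irrefl b)
  have hint : (∫ t in a..b, c t * g t) = 0 := h c c.contDiff ha0 hb0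
  -- nonnegativity
  have hnonneg : ∀ t : ℝ, 0 ≤ c t * g t := by
    intro t
    by_cases hmem : t ∈ Metric.ball t₀ (r/2)
    · exact mul_nonneg c.nonneg (hsub hmem).1.le
    · simp [hzero t hmem]
  have hcont : Continuous fun t => c t * g t := c.continuous.mul hg
  -- inner interval
  have hinner : (0:ℝ) < ∫ t in (t₀ - r/4)..(t₀ + r/4), c t * g t := by
    apply intervalIntegral_pos_of_pos_on (hcont.intervalIntegrable _ _)
    · intro t ht
      have hd : dist t t₀ < r/4 := by
        rw [Real.dist_eq, abs_lt]
        constructor <;> [linarith [ht.1]; linarith [ht.2]]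
      have h1 : c t = 1 := c.one_of_mem_closedBall (by simpa [hcin] using hd.le)
      have h2 : t ∈ Metric.ball t₀ (r/2) := by
        rw [Metric.mem_ball]; linarith
      rw [h1, one_mul]
      exact (hsub h2).1
    · linarith
  have hmemL : t₀ - r/4 ∈ Metric.ball t₀ (r/2) := by
    rw [Metric.mem_ball, Real.dist_eq]
    rw [abs_lt]; constructor <;> linarith
  have hmemR : t₀ + r/4 ∈ Metric.ball t₀ (r/2) := by
    rw [Metric.mem_ball, Real.dist_eq]
    rw [abs_lt]; constructor <;> linarith
  have hmono : (∫ t in (t₀ - r/4)..(t₀ + r/4), c t * g t) ≤ ∫ t in a..b, c t * g t := by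
    apply integral_mono_interval (c := a) (d := b)
    · exact (hsub hmemL).2.1.le
    · linarith
    · exact (hsub hmemR).2.2.le
    · exact Filter.Eventually.of_forall fun t => hnonneg t
    · exact hcont.intervalIntegrable _ _
  linarith

theorem weak_implies_strong
    (a b : ℝ) (x f : ℝ → ℝ)
    (hx : ContDiff ℝ 1 x) (hf : Continuous f)
    (hweak : ∀ φ : ℝ → ℝ, ContDiff ℝ 1 φ → φ a = 0 → φ b = 0 →
      -∫ t in a..b, deriv φ t * x t = ∫ t in a..b, φ t * f t) :
    ∀ t ∈ Set.Ioo a b, deriv x t = f t := by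
  have hx' : Continuous (deriv x) := hx.continuous_deriv le_rfl
  set g : ℝ → ℝ := fun t => deriv x t - f t with hg
  have hgc : Continuous g := hx'.sub hf
  -- key: ∫ φ g = 0 for all admissible φ
  have key : ∀ φ : ℝ → ℝ, ContDiff ℝ 1 φ → φ a = 0 → φ b = 0 →
      (∫ t in a..b, φ t * g t) = 0 := by
    intro φ hφ hφa hφb
    have hφ' : Continuous (deriv φ) := hφ.continuous_deriv le_rfl
    have hibp : (∫ t in a..b, deriv φ t * x t + φ t * deriv x t)
        = φ b * x b - φ a * x a := by
      exact intervalIntegral.integral_deriv_mul_eq_sub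
        (fun t _ => ((hφ.differentiable one_ne_zero) t).hasDerivAt)
        (fun t _ => ((hx.differentiable one_ne_zero) t).hasDerivAt)
        (hφ'.intervalIntegrable _ _)
        (hx'.intervalIntegrable _ _)
    have hsplit : (∫ t in a..b, deriv φ t * x t) + (∫ t in a..b, φ t * deriv x t)
        = φ b * x b - φ a * x a := by
      rw [← hibp]
      exact (integral_add ((hφ'.mul hx.continuous).intervalIntegrable _ _)
        (((hφ.continuous).mul hx').intervalIntegrable _ _)).symm
    rw [hφa, hφb] at hsplit
    simp only [zero_mul, sub_zero] at hsplit
    have h1 : (∫ t in a..b, φ t * deriv x t) = ∫ t in a..b, φ t * f t := by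
      rw [← hweak φ hφ hφa hφb]
      linarith
    have h2 : (∫ t in a..b, φ t * g t)
        = (∫ t in a..b, φ t * deriv x t) - ∫ t in a..b, φ t * f t := by
      rw [← integral_sub (f := fun t => φ t * deriv x t) (g := fun t => φ t * f t)
        (((hφ.continuous).mul hx').intervalIntegrable _ _)
        (((hφ.continuous).mul hf).intervalIntegrable _ _)]
      congr 1
      ext t
      simp [hg, mul_sub]
    rw [h2, h1, sub_self]
  have keyneg : ∀ φ : ℝ → ℝ, ContDiff ℝ 1 φ → φ a = 0 → φ b = 0 →
      (∫ t in a..b, φ t * (-g t)) = 0 := by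
    intro φ hφ hφa hφb
    have : (∫ t in a..b, φ t * (-g t)) = -∫ t in a..b, φ t * g t := by
      rw [← intervalIntegral.integral_neg]
      congr 1
      ext t
      ring
    rw [this, key φ hφ hφa hφb, neg_zero]
  intro t ht
  have h1 := aux_no_pos a b g hgc key t ht
  have h2 := aux_no_pos a b (fun t => -g t) (hgc.neg) keyneg t ht
  simp only [not_lt] at h1 h2
  have : g t = 0 := le_antisymm h1 (by simpa using h2)
  simpa [hg, sub_eq_zero] using this
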